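/- For every real number a > 1, define β_a : ℤ → ℝ by β_a(n) = sgn(n)·a^{|n|} (so β_a(0) = 0). Then for each a > 1, the set Λ_{β_a} = {(n, β_a(n)) : n ∈ ℤ} is a spectrum of the self-affine measure μ = μ_{R,B} for R = [[2,1],[0,2]] and B = {(0,0),(1,0)} with dim_Be(Λ_{β_a}) = 0, and the sets Λ_{β_a} for distinct a > 1 are pairwise distinct. -/

import Mathlib

open MeasureTheory Filter Set Metric
open scoped ENNReal

noncomputable section

/-- The plane with the Euclidean metric. -/
abbrev Plane : Type := EuclideanSpace ℝ (Fin 2)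

/-- The point `(a, b)` of the Euclidean plane. -/
def pt (a b : ℝ) : Plane := WithLp.toLp 2 ![a, b]

/-- The self-affine measure `μ_{R,B}` for `R = [[2,1],[0,2]]`, `B = {(0,0),(1,0)}`:
the pushforward of Lebesgue measure on `[0,1]` under `x ↦ (x, 0)`. -/
def muRB : Measure Plane :=
  Measure.map (fun x : ℝ => pt x 0) (volume.restrict (Set.Icc (0:ℝ) 1))

instance : IsProbabilityMeasure (volume.restrict (Set.Icc (0:ℝ) 1)) :=
  ⟨by simp [Real.volume_Icc]⟩

lemma measurable_pt0 : Measurable (fun x : ℝ => pt x 0) := by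
  unfold pt
  refine (WithLp.measurable_toLp ..).comp (f := fun x : ℝ => ![x, 0]) (measurable_pi_lambda _ (fun i => ?_))
  fin_cases i
  · simp only [Matrix.cons_val_zero]
    exact measurable_id
  · simp only [Matrix.cons_val_one, Matrix.head_cons]
    exact measurable_const

instance : IsProbabilityMeasure muRB :=
  Measure.isProbabilityMeasure_map measurable_pt0.aemeasurable

/-- The Fourier transform `μ̂(ξ) = ∫ e^{-2πi⟨ξ,x⟩} dμ(x)` of a measure on the plane. -/
def fourierTransform (μ : Measure Plane) (ξ : Plane) : ℂ :=
  ∫ x, Complex.exp ((-(2 * Real.pi * (inner ℝ ξ x : ℝ)) : ℝ) * Complex.I) ∂μ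

/-- The exponential function `e_λ(x) = e^{-2πi⟨λ,x⟩}`. -/
def expFn (lam : Plane) : Plane → ℂ :=
  fun x => Complex.exp ((-(2 * Real.pi * (inner ℝ lam x : ℝ)) : ℝ) * Complex.I)

lemma expFn_memLp (μ : Measure Plane) [IsFiniteMeasure μ] (lam : Plane) :
    MemLp (expFn lam) 2 μ := by
  refine MemLp.of_bound ?_ 1 ?_
  · apply Continuous.aestronglyMeasurable
    unfold expFn
    have h1 : Continuous fun x : Plane => (inner ℝ lam x : ℝ) :=
      continuous_const.inner continuous_id
    exact Complex.continuous_exp.comp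
      ((Complex.continuous_ofReal.comp ((continuous_const.mul h1).neg)).mul continuous_const)
  · refine Eventually.of_forall fun x => ?_
    unfold expFn
    rw [Complex.norm_exp_ofReal_mul_I]

/-- The exponential `e_λ` as an element of `L²(μ)`. -/
def expLp (μ : Measure Plane) [IsFiniteMeasure μ] (lam : Plane) : Lp ℂ 2 μ :=
  (expFn_memLp μ lam).toLp _

/-- `Λ` is an orthogonal set of `μ`: the exponentials `{e_λ : λ ∈ Λ}` form an
orthonormal family in `L²(μ)`. -/
def IsOrthogonalSet (μ : Measure Plane) [IsFiniteMeasure μ] (Λ : Set Plane) : Prop :=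
  Orthonormal ℂ (fun lam : Λ => expLp μ lam)

/-- `Λ` is a spectrum of `μ`: the exponentials `{e_λ : λ ∈ Λ}` form an
orthonormal basis of `L²(μ)`. -/
def IsSpectrum (μ : Measure Plane) [IsFiniteMeasure μ] (Λ : Set Plane) : Prop :=
  Orthonormal ℂ (fun lam : Λ => expLp μ lam) ∧
    (Submodule.span ℂ (Set.range (fun lam : Λ => expLp μ lam))).topologicalClosure = ⊤

/-- The upper `r`-Beurling density
`D_r^+(Λ) = limsup_{h→∞} sup_{x} #(Λ ∩ B(x,h)) / h^r`. -/
def beurlingDensity (r : ℝ) (Λ : Set Plane) : ℝ≥0∞ :=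
  limsup (fun h : ℝ =>
    ⨆ x : Plane, ((Λ ∩ Metric.ball x h).encard : ℝ≥0∞) / ENNReal.ofReal (h ^ r)) atTop

/-- The upper `r`-density (centered at the origin)
`B_r^+(Λ) = limsup_{h→∞} #(Λ ∩ B(0,h)) / h^r`. -/
def upperDensity (r : ℝ) (Λ : Set Plane) : ℝ≥0∞ :=
  limsup (fun h : ℝ =>
    ((Λ ∩ Metric.ball (0 : Plane) h).encard : ℝ≥0∞) / ENNReal.ofReal (h ^ r)) atTop

/-- The Beurling dimension `dim_Be(Λ) = sup {r > 0 : D_r^+(Λ) = ∞}`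
(equal to `0` when the set is empty, by the convention `sSup ∅ = 0` in `ℝ`). -/
def beurlingDim (Λ : Set Plane) : ℝ :=
  sSup {r : ℝ | 0 < r ∧ beurlingDensity r Λ = ⊤}

/-- The Banach dimension `dim_Ba(Λ) = sup {r > 0 : B_r^+(Λ) = ∞}`. -/
def banachDim (Λ : Set Plane) : ℝ :=
  sSup {r : ℝ | 0 < r ∧ upperDensity r Λ = ⊤}

/-- The sign of an integer, as a real number. -/
def isgn (n : ℤ) : ℝ := (Int.sign n : ℝ)

end


noncomputable section AuxProofs
open MeasureTheory Filter Set Metric Asymptotics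
open scoped ENNReal
lemma fact01 : Fact ((0:ℝ) < 1) := ⟨one_pos⟩
attribute [local instance] fact01

lemma expFn_cont (lam : Plane) : Continuous (expFn lam) := by
  unfold expFn
  have h1 : Continuous fun x : Plane => (inner ℝ lam x : ℝ) :=
    continuous_const.inner continuous_id
  exact Complex.continuous_exp.comp
    ((Complex.continuous_ofReal.comp ((continuous_const.mul h1).neg)).mul continuous_const)

lemma expFn_pt (lam : Plane) (x : ℝ) :
    expFn lam (pt x 0) = Complex.exp ((-(2 * Real.pi * (lam 0 * x)) : ℝ) * Complex.I) := by
  unfold expFn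
  congr 2
  have h : (inner ℝ lam (pt x 0) : ℝ) = lam 0 * (pt x 0) 0 + lam 1 * (pt x 0) 1 := by
    simp [EuclideanSpace.inner_eq_star_dotProduct, dotProduct, Fin.sum_univ_two, mul_comm]
  have h2 : (pt x 0) 0 = x := by simp [pt]
  have h3 : (pt x 0) 1 = 0 := by simp [pt]
  rw [h, h2, h3, mul_zero, add_zero]

lemma int_exp (k : ℤ) : ∫ x in (0:ℝ)..1, Complex.exp ((2 * Real.pi * k * Complex.I) * x)
    = if k = 0 then 1 else 0 := by
  rcases eq_or_ne k 0 with rfl | hk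
  · simp
  · rw [if_neg hk, integral_exp_mul_complex (by
      simp [Complex.ext_iff, Real.pi_ne_zero, hk, mul_ne_zero])]
    have : Complex.exp (2 * ↑Real.pi * ↑k * Complex.I * ↑(1:ℝ)) = 1 := by
      push_cast
      rw [mul_one, show (2 * (Real.pi:ℂ) * k * Complex.I) = k * (2 * Real.pi * Complex.I) by ring,
        Complex.exp_int_mul_two_pi_mul_I]
    rw [this]
    push_cast
    simp

lemma inner_expLp (lam lam' : Plane) :
    (inner ℂ (expLp muRB lam) (expLp muRB lam') : ℂ)
      = ∫ x in Set.Icc (0:ℝ) 1,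
          Complex.exp (((2 * Real.pi * (lam 0 - lam' 0) * Complex.I)) * x) := by
  rw [MeasureTheory.L2.inner_def]
  have h1 : (fun y => (inner ℂ ((expLp muRB lam : Lp ℂ 2 muRB) y) ((expLp muRB lam' : Lp ℂ 2 muRB) y) : ℂ))
      =ᵐ[muRB] fun y => (starRingEnd ℂ) (expFn lam y) * expFn lam' y := by
    filter_upwards [(expFn_memLp muRB lam).coeFn_toLp, (expFn_memLp muRB lam').coeFn_toLp] with y h h'
    rw [RCLike.inner_apply, mul_comm]
    exact congrArg₂ _ (congrArg _ h) h'
  rw [integral_congr_ae h1]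
  unfold muRB
  rw [integral_map measurable_pt0.aemeasurable]
  swap
  · exact (Continuous.aestronglyMeasurable (by
      exact (Complex.continuous_conj.comp (expFn_cont lam)).mul (expFn_cont lam')))
  apply integral_congr_ae
  refine Eventually.of_forall fun x => ?_
  show (starRingEnd ℂ) (expFn lam (pt x 0)) * expFn lam' (pt x 0) = _
  rw [expFn_pt, expFn_pt]
  rw [← Complex.exp_conj]
  rw [← Complex.exp_add]
  congr 1
  simp [Complex.ext_iff]
  ring

attribute [local instance] fact01

lemma haar_one : (AddCircle.haarAddCircle : Measure (AddCircle (1:ℝ))) = volume := by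
  rw [AddCircle.volume_eq_smul_haarAddCircle]
  simp

lemma restrict_Ioc_Icc : (volume.restrict (Set.Ioc (0:ℝ) 1)) = volume.restrict (Set.Icc (0:ℝ) 1) :=
  Measure.restrict_congr_set Ioc_ae_eq_Icc

lemma mp_mk : MeasurePreserving ((↑) : ℝ → AddCircle (1:ℝ))
    (volume.restrict (Set.Icc (0:ℝ) 1)) AddCircle.haarAddCircle := by
  rw [haar_one, ← restrict_Ioc_Icc]
  simpa using AddCircle.measurePreserving_mk (T := 1) 0

lemma orthonormal_exp (Λ : Set Plane)
    (hinj : ∀ lam lam' : Λ, (lam:Plane) 0 = (lam':Plane) 0 → lam = lam')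
    (hint : ∀ lam : Λ, ∃ n : ℤ, (lam:Plane) 0 = (n:ℝ)) :
    Orthonormal ℂ (fun lam : Λ => expLp muRB lam) := by
  classical
  rw [orthonormal_iff_ite]
  intro i j
  obtain ⟨n, hn⟩ := hint i
  obtain ⟨m, hm⟩ := hint j
  rw [inner_expLp, hn, hm, ← restrict_Ioc_Icc,
    ← intervalIntegral.integral_of_le (zero_le_one (α := ℝ))]
  have : ∀ x : ℝ, Complex.exp (2 * Real.pi * (((n:ℝ):ℂ) - ((m:ℝ):ℂ)) * Complex.I * x)
      = Complex.exp ((2 * Real.pi * ((n - m : ℤ):ℂ) * Complex.I) * x) := by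
    intro x; push_cast; ring_nf
  rw [intervalIntegral.integral_congr (fun x _ => this x), int_exp]
  have hiff : n - m = 0 ↔ i = j := by
    constructor
    · intro hnm
      apply hinj
      rw [hn, hm, sub_eq_zero.mp hnm]
    · intro hij
      rw [hij] at hn
      have : (n:ℝ) = m := hn.symm.trans hm
      exact sub_eq_zero.mpr (by exact_mod_cast this)
  simp only [hiff]


lemma conj_expFn_pt (lam : Plane) (x : ℝ) :
    (starRingEnd ℂ) (expFn lam (pt x 0))
      = Complex.exp (((2 * Real.pi * (lam 0 * x) : ℝ) : ℂ) * Complex.I) := by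
  rw [expFn_pt, ← Complex.exp_conj]
  congr 1
  simp [Complex.ext_iff]

lemma key_int (g : Lp ℂ 2 muRB) (lam : Plane)
    (h0 : (inner ℂ (expLp muRB lam) g : ℂ) = 0) :
    ∫ x in Set.Icc (0:ℝ) 1,
        Complex.exp (((2 * Real.pi * (lam 0 * x) : ℝ) : ℂ) * Complex.I) * g (pt x 0) = 0 := by
  have hinner : (inner ℂ (expLp muRB lam) g : ℂ)
      = ∫ y, (starRingEnd ℂ) (expFn lam y) * g y ∂muRB := by
    rw [MeasureTheory.L2.inner_def]
    apply integral_congr_ae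
    filter_upwards [(expFn_memLp muRB lam).coeFn_toLp] with y hy
    rw [RCLike.inner_apply, mul_comm]
    exact congrArg₂ _ (congrArg _ hy) rfl
  have hmeas : AEStronglyMeasurable
      (fun y : Plane => (starRingEnd ℂ) (expFn lam y) * (g : Plane → ℂ) y)
      (Measure.map (fun x : ℝ => pt x 0) (volume.restrict (Set.Icc (0:ℝ) 1))) :=
    ((Complex.continuous_conj.comp (expFn_cont lam)).aestronglyMeasurable).mul
        (Lp.aestronglyMeasurable g)
  have h0' : ∫ x in Set.Icc (0:ℝ) 1,
      (starRingEnd ℂ) (expFn lam (pt x 0)) * g (pt x 0) = 0 := by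
    rw [← integral_map measurable_pt0.aemeasurable hmeas]
    rw [hinner] at h0
    exact h0
  rw [← h0']
  apply integral_congr_ae
  refine Eventually.of_forall fun x => ?_
  simp only [conj_expFn_pt]

lemma span_exp_top (Λ : Set Plane)
    (hcov : ∀ n : ℤ, ∃ lam : Λ, (lam : Plane) 0 = (n : ℝ)) :
    (Submodule.span ℂ (Set.range fun lam : Λ => expLp muRB lam)).topologicalClosure = ⊤ := by
  rw [Submodule.topologicalClosure_eq_top_iff, Submodule.eq_bot_iff]
  intro g hg
  have hsm : StronglyMeasurable (fun x : ℝ => g (pt x 0)) :=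
    (Lp.stronglyMeasurable g).comp_measurable measurable_pt0
  have key : ∀ n : ℤ,
      ∫ x in Set.Icc (0:ℝ) 1,
        Complex.exp (((2 * Real.pi * ((n:ℝ) * x) : ℝ) : ℂ) * Complex.I) * g (pt x 0) = 0 := by
    intro n
    obtain ⟨lam, hlam⟩ := hcov n
    have hmem : expLp muRB lam ∈ Submodule.span ℂ (Set.range fun lam : Λ => expLp muRB lam) :=
      Submodule.subset_span ⟨lam, rfl⟩
    have h0 : (inner ℂ (expLp muRB (lam : Plane)) g : ℂ) = 0 :=
      (Submodule.mem_orthogonal _ g).1 hg _ hmem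
    have := key_int g lam h0
    rw [hlam] at this
    exact this
  set u : AddCircle (1:ℝ) → ℂ := AddCircle.liftIoc 1 0 (fun x : ℝ => g (pt x 0)) with hu
  have hu_eq : ∀ x ∈ Set.Ioc (0:ℝ) 1, u ((x : ℝ) : AddCircle (1:ℝ)) = g (pt x 0) := by
    intro x hx
    exact AddCircle.liftIoc_coe_apply (by simpa using hx)
  have husm : StronglyMeasurable u := by
    have h2 : StronglyMeasurable fun z : AddCircle (1:ℝ) =>
        g (pt ((AddCircle.equivIoc 1 0 z : ℝ)) 0) :=
      hsm.comp_measurable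
        (measurable_subtype_coe.comp (AddCircle.measurableEquivIoc 1 0).measurable)
    exact h2
  have humk : (fun x : ℝ => u ((x:ℝ) : AddCircle (1:ℝ)))
      =ᵐ[volume.restrict (Set.Icc (0:ℝ) 1)] (fun x : ℝ => g (pt x 0)) := by
    rw [← restrict_Ioc_Icc]
    filter_upwards [ae_restrict_mem measurableSet_Ioc] with x hx
    exact hu_eq x hx
  have hmemh : MemLp (fun x : ℝ => g (pt x 0)) 2 (volume.restrict (Set.Icc (0:ℝ) 1)) := by
    have h1 : MemLp (g : Plane → ℂ) 2
        (Measure.map (fun x : ℝ => pt x 0) (volume.restrict (Set.Icc (0:ℝ) 1))) := Lp.memLp g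
    rw [memLp_map_measure_iff (Lp.stronglyMeasurable g).aestronglyMeasurable
      measurable_pt0.aemeasurable] at h1
    exact h1
  have hmemu : MemLp u 2 AddCircle.haarAddCircle := by
    rw [← mp_mk.map_eq, memLp_map_measure_iff husm.aestronglyMeasurable
      mp_mk.measurable.aemeasurable]
    exact hmemh.ae_eq humk.symm
  set U := hmemu.toLp u with hU
  have hcoeff : ∀ n : ℤ, fourierCoeff (U : AddCircle (1:ℝ) → ℂ) n = 0 := by
    intro n
    have h1 : fourierCoeff (U : AddCircle (1:ℝ) → ℂ) n = fourierCoeff u n := by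
      unfold fourierCoeff
      apply integral_congr_ae
      filter_upwards [hmemu.coeFn_toLp] with t ht
      rw [ht]
    have h2 : fourierCoeff u n = ∫ x in Set.Icc (0:ℝ) 1,
        fourier (-n) ((x:ℝ) : AddCircle (1:ℝ)) • u ((x:ℝ) : AddCircle (1:ℝ))
        ∂volume := by
      unfold fourierCoeff
      rw [← mp_mk.map_eq, integral_map (f := fun t : AddCircle (1:ℝ) => fourier (-n) t • u t) mp_mk.measurable.aemeasurable
        (((fourier (-n)).continuous.aestronglyMeasurable).smul husm.aestronglyMeasurable)]
    have h3 : ∫ x in Set.Icc (0:ℝ) 1,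
        fourier (-n) ((x:ℝ) : AddCircle (1:ℝ)) • u ((x:ℝ) : AddCircle (1:ℝ)) ∂volume
        = ∫ x in Set.Icc (0:ℝ) 1,
          Complex.exp (((2 * Real.pi * (((-n : ℤ):ℝ) * x) : ℝ) : ℂ) * Complex.I) * g (pt x 0)
          ∂volume := by
      apply integral_congr_ae
      filter_upwards [humk] with x hx
      rw [smul_eq_mul, hx, fourier_coe_apply]
      congr 2
      push_cast
      ring
    rw [h1, h2, h3]
    exact key (-n)
  have hU0 : ∫ t, ‖(U : AddCircle (1:ℝ) → ℂ) t‖^2 ∂AddCircle.haarAddCircle = 0 := by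
    rw [← tsum_sq_fourierCoeff U]
    simp [hcoeff]
  have hUint : Integrable (fun t => ‖(U : AddCircle (1:ℝ) → ℂ) t‖^2) AddCircle.haarAddCircle := by
    have h4 := (Lp.memLp U).integrable_norm_rpow two_ne_zero ENNReal.ofNat_ne_top
    have h2 : (2 : ℝ≥0∞).toReal = (2:ℝ) := by simp
    rw [h2] at h4
    convert h4 using 2 with t
    rw [show ((2:ℝ)) = ((2:ℕ):ℝ) by norm_num, Real.rpow_natCast]
  have hUz : (U : AddCircle (1:ℝ) → ℂ) =ᵐ[AddCircle.haarAddCircle] 0 := by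
    have := (integral_eq_zero_iff_of_nonneg (fun t => sq_nonneg _) hUint).1 hU0
    filter_upwards [this] with t ht
    simpa [pow_eq_zero_iff] using ht
  have huz : u =ᵐ[AddCircle.haarAddCircle] 0 := (hmemu.coeFn_toLp.symm).trans hUz
  have hmk0 : ∀ᵐ x ∂(volume.restrict (Set.Icc (0:ℝ) 1)), u ((x:ℝ) : AddCircle (1:ℝ)) = 0 := by
    rw [← mp_mk.map_eq] at huz
    exact ae_of_ae_map mp_mk.measurable.aemeasurable huz
  have hgz : (g : Plane → ℂ) =ᵐ[muRB] 0 := by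
    have h1 : ∀ᵐ y ∂(Measure.map (fun x : ℝ => pt x 0) (volume.restrict (Set.Icc (0:ℝ) 1))),
        (g : Plane → ℂ) y = 0 := by
      rw [ae_map_iff measurable_pt0.aemeasurable
        ((Lp.stronglyMeasurable g).measurableSet_eq_fun stronglyMeasurable_const)]
      filter_upwards [humk, hmk0] with x hx hx0
      rw [← hx, hx0]
    exact h1
  exact (Lp.eq_zero_iff_ae_eq_zero).2 hgz

lemma coord_dist_le (y z : Plane) (i : Fin 2) : |y i - z i| ≤ dist y z := by
  rw [EuclideanSpace.dist_eq, ← Real.sqrt_sq_eq_abs]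
  apply Real.sqrt_le_sqrt
  calc (y i - z i)^2 = dist (y i) (z i) ^ 2 := by rw [Real.dist_eq, sq_abs]
  _ ≤ ∑ j : Fin 2, dist (y j) (z j) ^ 2 :=
      Finset.single_le_sum (f := fun j => dist (y j) (z j)^2) (fun j _ => sq_nonneg _)
        (Finset.mem_univ i)

lemma natCount (a : ℝ) (ha : 1 < a) (c t L : ℝ)
    (hL : Real.log (1+2*t) / Real.log a ≤ L) :
    {k : ℕ | 1 ≤ k ∧ |a^k - c| ≤ t}.encard
      ≤ ((2*⌊L⌋₊ + 1 : ℕ) : ℕ∞) := by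
  set U := {k : ℕ | 1 ≤ k ∧ |a^k - c| ≤ t} with hUdef
  set K := ⌊L⌋₊ with hK
  rcases U.eq_empty_or_nonempty with hU | ⟨k₀, hk₀⟩
  · simp [hU]
  · have hgap : ∀ k ∈ U, ∀ l ∈ U, k ≤ l → l ≤ k + K := by
      intro k hk l hl hkl
      have hak : (1:ℝ) ≤ a^k := one_le_pow₀ ha.le
      have halk : (1:ℝ) ≤ a^(l-k) := one_le_pow₀ ha.le
      have h1 : a^l - a^k ≤ 2*t := by
        have e1 := le_abs_self (a^l - c)
        have e2 := le_abs_self (c - a^k)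
        rw [abs_sub_comm] at e2
        have := hk.2; have := hl.2
        linarith
      have heq : a^l - a^k = a^k * (a^(l-k) - 1) := by
        rw [mul_sub, mul_one, ← pow_add, Nat.add_sub_cancel' hkl]
      have h2 : a^(l-k) - 1 ≤ 2*t := by nlinarith
      have h4 : l - k ≤ K := by
        apply Nat.le_floor
        refine le_trans ?_ hL
        rw [le_div_iff₀ (Real.log_pos ha)]
        calc ((l-k : ℕ):ℝ) * Real.log a = Real.log (a^(l-k)) := by
              rw [Real.log_pow]
        _ ≤ Real.log (1+2*t) := Real.log_le_log (by positivity) (by linarith)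
      omega
    have hsub : U ⊆ Set.Icc (k₀ - K) (k₀ + K) := by
      intro m hm
      rcases le_total m k₀ with hle | hle
      · have := hgap m hm k₀ hk₀ hle
        exact ⟨by omega, by omega⟩
      · have := hgap k₀ hk₀ m hm hle
        exact ⟨by omega, by omega⟩
    calc U.encard ≤ (Set.Icc (k₀-K) (k₀+K)).encard := Set.encard_mono hsub
    _ = (((k₀+K) + 1 - (k₀-K) : ℕ) : ℕ∞) := by
        rw [← Finset.coe_Icc, Set.encard_coe_eq_coe_finsetCard, Nat.card_Icc]
    _ ≤ _ := Nat.cast_le.mpr (by omega)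

lemma ballCount (a : ℝ) (ha : 1 < a) (x : Plane) (h : ℝ) :
    ((Set.range fun n : ℤ => pt (n : ℝ) (isgn n * a ^ n.natAbs)) ∩ Metric.ball x h).encard
      ≤ ((4*⌊Real.log (1+4*h)/Real.log a⌋₊ + 3 : ℕ) : ℕ∞) := by
  set F := fun n : ℤ => pt (n : ℝ) (isgn n * a ^ n.natAbs) with hF
  have hFinj : Function.Injective F := by
    intro n m hnm
    have h0 : ((n:ℝ)) = m := by simpa [hF, pt] using congrArg (fun v : Plane => v 0) hnm
    exact_mod_cast h0
  have him : Set.range F ∩ Metric.ball x h = F '' {n : ℤ | F n ∈ Metric.ball x h} := by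
    ext y
    constructor
    · rintro ⟨⟨n, rfl⟩, hb⟩
      exact ⟨n, hb, rfl⟩
    · rintro ⟨n, hn, rfl⟩
      exact ⟨⟨n, rfl⟩, hn⟩
  rw [him, (hFinj.injOn).encard_image]
  set S := {n : ℤ | F n ∈ Metric.ball x h} with hS
  set K := ⌊Real.log (1+4*h)/Real.log a⌋₊ with hK
  have hsplit : S ⊆ (S ∩ {n : ℤ | 0 < n}) ∪ ((S ∩ {n : ℤ | n < 0}) ∪ {(0:ℤ)}) := by
    intro n hn
    rcases lt_trichotomy n 0 with h1 | h1 | h1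
    · exact Or.inr (Or.inl ⟨hn, h1⟩)
    · exact Or.inr (Or.inr (by simp [h1]))
    · exact Or.inl ⟨hn, h1⟩
  have hcoord : ∀ n ∈ S, |isgn n * a ^ n.natAbs - x 1| ≤ 2*h ∧ 0 < h := by
    intro n hn
    have hd : dist (F n) x < h := hn
    have hd0 : (0:ℝ) ≤ dist (F n) x := dist_nonneg
    have h1 : |F n 1 - x 1| ≤ dist (F n) x := coord_dist_le _ _ 1
    have h2 : F n 1 = isgn n * a ^ n.natAbs := by simp [hF, pt]
    rw [h2] at h1
    constructor
    · linarith
    · linarith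
  have hpos : (S ∩ {n : ℤ | 0 < n}).encard ≤ ((2*K + 1 : ℕ) : ℕ∞) := by
    have hinj : Set.InjOn Int.natAbs (S ∩ {n : ℤ | 0 < n}) := by
      intro m hm n hn hmn
      have := hm.2; have := hn.2
      simp only [Set.mem_setOf_eq] at *
      omega
    rw [← hinj.encard_image]
    refine le_trans (Set.encard_mono ?_) (natCount a ha (x 1) (2*h) _ (by rw [show (1+2*(2*h) : ℝ) = 1+4*h by ring]))
    rintro k ⟨n, ⟨hnS, hn0⟩, rfl⟩
    obtain ⟨hb, hh⟩ := hcoord n hnS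
    have hsgn : isgn n = 1 := by
      unfold isgn
      rw [Int.sign_eq_one_iff_pos.mpr hn0]
      simp
    rw [hsgn, one_mul] at hb
    exact ⟨by have : 0 < n := hn0; omega, hb⟩
  have hneg : (S ∩ {n : ℤ | n < 0}).encard ≤ ((2*K + 1 : ℕ) : ℕ∞) := by
    have hinj : Set.InjOn Int.natAbs (S ∩ {n : ℤ | n < 0}) := by
      intro m hm n hn hmn
      have := hm.2; have := hn.2
      simp only [Set.mem_setOf_eq] at *
      omega
    rw [← hinj.encard_image]
    refine le_trans (Set.encard_mono ?_) (natCount a ha (-(x 1)) (2*h) _ (by rw [show (1+2*(2*h) : ℝ) = 1+4*h by ring]))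
    rintro k ⟨n, ⟨hnS, hn0⟩, rfl⟩
    obtain ⟨hb, hh⟩ := hcoord n hnS
    have hsgn : isgn n = -1 := by
      unfold isgn
      rw [Int.sign_eq_neg_one_iff_neg.mpr hn0]
      simp
    rw [hsgn] at hb
    refine ⟨by have : n < 0 := hn0; omega, ?_⟩
    calc |a ^ n.natAbs - -(x 1)| = |(-1) * a ^ n.natAbs - x 1| := by
          rw [← abs_neg]; congr 1; ring
    _ ≤ 2*h := hb
  calc S.encard ≤ ((S ∩ {n : ℤ | 0 < n}) ∪ ((S ∩ {n : ℤ | n < 0}) ∪ {(0:ℤ)})).encard :=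
        Set.encard_mono hsplit
  _ ≤ (S ∩ {n : ℤ | 0 < n}).encard + ((S ∩ {n : ℤ | n < 0}).encard + ({(0:ℤ)} : Set ℤ).encard) :=
        le_trans (Set.encard_union_le _ _) (by
          exact add_le_add le_rfl (Set.encard_union_le _ _))
  _ ≤ ((2*K + 1 : ℕ) : ℕ∞) + (((2*K + 1 : ℕ) : ℕ∞) + 1) := by
        refine add_le_add hpos (add_le_add hneg ?_)
        rw [Set.encard_singleton]
  _ = ((4*K + 3 : ℕ) : ℕ∞) := by
        rw [show ((1:ℕ∞)) = ((1:ℕ):ℕ∞) from rfl, ← Nat.cast_add, ← Nat.cast_add]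
        congr 1
        omega

lemma ev_bound (a r : ℝ) (ha : 1 < a) (hr : 0 < r) :
    ∀ᶠ h : ℝ in atTop, 1 ≤ h ∧
      ((4*⌊Real.log (1+4*h)/Real.log a⌋₊ + 3 : ℕ) : ℝ) ≤ h ^ r := by
  have hlog : (fun h : ℝ => Real.log (1+4*h)) =O[atTop]
      (fun h : ℝ => Real.log 5 + Real.log h) := by
    apply IsBigO.of_bound 1
    filter_upwards [eventually_ge_atTop (1:ℝ)] with h h1
    rw [one_mul, Real.norm_eq_abs, Real.norm_eq_abs]
    have h5 : Real.log (1+4*h) ≤ Real.log (5*h) :=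
      Real.log_le_log (by linarith) (by linarith)
    rw [Real.log_mul (by norm_num) (by linarith)] at h5
    have hpos : 0 ≤ Real.log (1+4*h) := Real.log_nonneg (by linarith)
    have hpos2 : 0 ≤ Real.log h := Real.log_nonneg h1
    have hpos3 : (0:ℝ) ≤ Real.log 5 := Real.log_nonneg (by norm_num)
    rw [abs_of_nonneg hpos, abs_of_nonneg (by linarith)]
    exact h5
  have hlo : (fun h : ℝ => Real.log 5 + Real.log h) =o[atTop] (fun h : ℝ => h ^ r) := by
    apply IsLittleO.add
    · exact Asymptotics.isLittleO_const_left.mpr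
        (Or.inr (tendsto_norm_atTop_atTop.comp (tendsto_rpow_atTop hr)))
    · exact isLittleO_log_rpow_atTop hr
  have hcomb : (fun h : ℝ => Real.log (1+4*h)) =o[atTop] (fun h : ℝ => h^r) :=
    hlog.trans_isLittleO hlo
  have hc : (fun h : ℝ => (4 / Real.log a) * Real.log (1+4*h) + 3) =o[atTop]
      (fun h : ℝ => h^r) := by
    refine IsLittleO.add (hcomb.const_mul_left _) ?_
    exact Asymptotics.isLittleO_const_left.mpr
      (Or.inr (tendsto_norm_atTop_atTop.comp (tendsto_rpow_atTop hr)))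
  filter_upwards [hc.def one_pos, eventually_ge_atTop (1:ℝ)] with h hb h1
  refine ⟨h1, ?_⟩
  rw [one_mul, Real.norm_eq_abs, Real.norm_eq_abs] at hb
  have hfl : (⌊Real.log (1+4*h)/Real.log a⌋₊ : ℝ) ≤ Real.log (1+4*h)/Real.log a :=
    Nat.floor_le (div_nonneg (Real.log_nonneg (by linarith)) (Real.log_pos ha).le)
  have habs : ((4/Real.log a) * Real.log (1+4*h) + 3)
      ≤ |(4/Real.log a) * Real.log (1+4*h) + 3| := le_abs_self _
  have hrpow : |h ^ r| = h ^ r := abs_of_nonneg (Real.rpow_nonneg (by linarith) r)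
  push_cast
  rw [hrpow] at hb
  have : (4/Real.log a) * Real.log (1+4*h) = 4 * (Real.log (1+4*h)/Real.log a) := by ring
  nlinarith [hb, habs, hfl]

lemma beurlingDensity_ne_top (a r : ℝ) (ha : 1 < a) (hr : 0 < r) :
    beurlingDensity r (Set.range fun n : ℤ => pt (n:ℝ) (isgn n * a ^ n.natAbs)) ≠ ⊤ := by
  have hle : beurlingDensity r (Set.range fun n : ℤ => pt (n:ℝ) (isgn n * a ^ n.natAbs)) ≤ 1 := by
    refine limsup_le_of_le (by isBoundedDefault) ?_
    filter_upwards [ev_bound a r ha hr] with h hh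
    obtain ⟨h1, h2⟩ := hh
    apply iSup_le
    intro x
    have hc := ballCount a ha x h
    have hcast : (((Set.range fun n : ℤ => pt (n:ℝ) (isgn n * a ^ n.natAbs)) ∩
        Metric.ball x h).encard : ℝ≥0∞) ≤ ENNReal.ofReal (h^r) := by
      calc (((Set.range fun n : ℤ => pt (n:ℝ) (isgn n * a ^ n.natAbs)) ∩
          Metric.ball x h).encard : ℝ≥0∞)
          ≤ (((4*⌊Real.log (1+4*h)/Real.log a⌋₊ + 3 : ℕ) : ℕ∞) : ℝ≥0∞) := by
            exact_mod_cast hc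
      _ = ENNReal.ofReal ((4*⌊Real.log (1+4*h)/Real.log a⌋₊ + 3 : ℕ) : ℝ) := by
            rw [ENNReal.ofReal_natCast]
            norm_cast
      _ ≤ ENNReal.ofReal (h^r) := ENNReal.ofReal_le_ofReal h2
    exact ENNReal.div_le_of_le_mul (by rwa [one_mul])
  intro htop
  rw [htop] at hle
  simp at hle

lemma beurlingDim_zero (a : ℝ) (ha : 1 < a) :
    beurlingDim (Set.range fun n : ℤ => pt (n:ℝ) (isgn n * a ^ n.natAbs)) = 0 := by
  unfold beurlingDim
  have he : {r : ℝ | 0 < r ∧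
      beurlingDensity r (Set.range fun n : ℤ => pt (n:ℝ) (isgn n * a ^ n.natAbs)) = ⊤} = ∅ := by
    rw [Set.eq_empty_iff_forall_notMem]
    rintro r ⟨hr, htop⟩
    exact beurlingDensity_ne_top a r ha hr htop
  rw [he, Real.sSup_empty]

end AuxProofs

open MeasureTheory Filter Set Metric
/-- For every `a > 1`, with `β_a(n) = sgn(n)·a^{|n|}`, the set
`Λ_{β_a}` is a spectrum of `μ_{R,B}` with Beurling dimension `0`, and the sets
`Λ_{β_a}` for distinct `a > 1` are pairwise distinct. -/
theorem isSpectrum_muRB_exp_family :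
    (∀ a : ℝ, 1 < a →
      IsSpectrum muRB (Set.range fun n : ℤ => pt (n : ℝ) (isgn n * a ^ n.natAbs)) ∧
        beurlingDim (Set.range fun n : ℤ => pt (n : ℝ) (isgn n * a ^ n.natAbs)) = 0) ∧
    ∀ a a' : ℝ, 1 < a → 1 < a' →
      (Set.range fun n : ℤ => pt (n : ℝ) (isgn n * a ^ n.natAbs)) =
        (Set.range fun n : ℤ => pt (n : ℝ) (isgn n * a' ^ n.natAbs)) → a = a' := by
  constructor
  · intro a ha
    refine ⟨⟨?_, ?_⟩, ?_⟩
    · apply orthonormal_exp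
      · rintro ⟨lam, hlam⟩ ⟨lam', hlam'⟩ h0
        obtain ⟨n, rfl⟩ := hlam
        obtain ⟨m, rfl⟩ := hlam'
        apply Subtype.ext
        simp only
        have hnm : (n:ℝ) = (m:ℝ) := by simpa [pt] using h0
        have : n = m := by exact_mod_cast hnm
        rw [this]
      · rintro ⟨lam, hlam⟩
        obtain ⟨n, rfl⟩ := hlam
        exact ⟨n, by simp [pt]⟩
    · apply span_exp_top
      intro n
      exact ⟨⟨_, ⟨n, rfl⟩⟩, by simp [pt]⟩
    · exact beurlingDim_zero a ha
  · intro a a' ha ha' hset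
    have h1 : pt ((1:ℤ):ℝ) (isgn 1 * a ^ (1:ℤ).natAbs)
        ∈ (Set.range fun n : ℤ => pt (n:ℝ) (isgn n * a' ^ n.natAbs)) := by
      rw [← hset]
      exact ⟨1, rfl⟩
    obtain ⟨m, hm⟩ := h1
    have h0 : ((m:ℝ)) = ((1:ℤ):ℝ) := by simpa [pt] using congrArg (fun v : Plane => v 0) hm
    have hm1 : m = 1 := by exact_mod_cast h0
    subst hm1
    have h2 : isgn 1 * a' ^ (1:ℤ).natAbs = isgn 1 * a ^ (1:ℤ).natAbs := by simpa only [pt, Matrix.cons_val_one, Matrix.head_cons, Matrix.cons_val_zero] using congrArg (fun v : Plane => v 1) hm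
    have hsgn : isgn 1 = 1 := by unfold isgn; simp
    rw [hsgn, one_mul, one_mul] at h2
    simpa using h2.symm
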